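/- Let T=(V,E) be a tree and let v* ∈ V be arbitrary. Define K = Σ_{v∈V} |P_v|, where P_v is the set of edges on the unique path between v* and v. Then there exists an integer M ≥ 0 and a 5-local function red : {0,1}^{3|V|−1} × {0,1}^M → {0,1}^{2|V|+K} such that, if (X,Y,W) ~ D_host(T) and R ~ U_{1/2}^M are independent, then red((X,Y,W), R) is distributed exactly as D_hard(|V|, |V|+K). -/

import Mathlib

open Finset

def tow : ℕ → ℕ
  | 0 => 1
  | x + 1 => 2 ^ tow x

def hw {ι : Type*} [Fintype ι] (x : ι → Bool) : ℕ :=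
  (Finset.univ.filter fun i => x i = true).card

def IsLocal {κ ι : Type*} (d : ℕ) (f : (κ → Bool) → ι → Bool) : Prop :=
  ∀ i : ι, ∃ T : Finset κ, T.card ≤ d ∧
    ∀ x y : κ → Bool, (∀ j ∈ T, x j = y j) → f x i = f y i

def IsProductDist {κ : Type*} [Fintype κ] (p : (κ → Bool) → ℝ) : Prop :=
  ∃ γ : κ → ℝ, (∀ j, 0 ≤ γ j ∧ γ j ≤ 1) ∧
    ∀ x, p x = ∏ j, if x j then γ j else 1 - γ j

def IsDist {α : Type*} [Fintype α] (p : α → ℝ) : Prop :=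
  (∀ a, 0 ≤ p a) ∧ ∑ a, p a = 1

noncomputable def push {α β : Type*} [Fintype α] [DecidableEq β] (f : α → β) (p : α → ℝ) :
    β → ℝ :=
  fun b => ∑ a, if f a = b then p a else 0

noncomputable def tv {α : Type*} [Fintype α] (p q : α → ℝ) : ℝ :=
  (1 / 2) * ∑ a, |p a - q a|

noncomputable def biased {ι : Type*} [Fintype ι] (γ : ℝ) (x : ι → Bool) : ℝ :=
  ∏ i, if x i then γ else 1 - γ

noncomputable def unifParity (ι : Type*) [Fintype ι] [DecidableEq ι] (b : ℕ)
    (y : ι → Bool) : ℝ :=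
  if hw y % 2 = b then
    (1 : ℝ) / ((Finset.univ.filter fun z : ι → Bool => hw z % 2 = b).card : ℝ)
  else 0

noncomputable def dHard (n m : ℕ) (p : (Fin n → Bool) × (Fin m → Bool)) : ℝ :=
  biased (1 / 4) p.1 *
    (if hw p.1 % 2 = 1 then (1 / 2 : ℝ) ^ m
     else unifParity (Fin m) ((hw p.1 / 2) % 2) p.2)

def splitFun (n m : ℕ) (z : Fin (n + m) → Bool) : (Fin n → Bool) × (Fin m → Bool) :=
  (fun i => z (Fin.castAdd m i), fun j => z (Fin.natAdd n j))

noncomputable def dHard' (n m : ℕ) (z : Fin (n + m) → Bool) : ℝ :=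
  dHard n m (splitFun n m z)

def wOf {V : Type*} (Z : V → Bool) : Sym2 V → Bool :=
  Sym2.lift ⟨fun u v => xor (Z u) (Z v), fun u v => Bool.xor_comm _ _⟩

def ip {V : Type*} [Fintype V] (Z X : V → Bool) : ℕ :=
  (Finset.univ.filter fun v => Z v = true ∧ X v = true).card

noncomputable def dHost {V : Type*} [Fintype V] [DecidableEq V] (G : SimpleGraph V)
    [DecidableRel G.Adj] (z : (V ⊕ V ⊕ G.edgeSet) → Bool) : ℝ :=
  let X : V → Bool := fun v => z (Sum.inl v)
  let Y : V → Bool := fun v => z (Sum.inr (Sum.inl v))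
  let W : G.edgeSet → Bool := fun e => z (Sum.inr (Sum.inr e))
  biased (1 / 4) X *
    ∑ Z : V → Bool,
      (1 / 2 : ℝ) ^ (Fintype.card V) *
        (if ∀ e : G.edgeSet, W e = wOf Z e.1 then 1 else 0) *
        (if hw X % 2 = 1 then (1 / 2 : ℝ) ^ (Fintype.card V)
         else unifParity V ((ip Z X + hw X / 2) % 2) Y)

def bpar (b : Bool) : ZMod 2 := if b then 1 else 0

lemma bpar_xor (a b : Bool) : bpar (xor a b) = bpar a + bpar b := by
  cases a <;> cases b <;> decide

lemma bpar_inj {a b : Bool} (h : bpar a = bpar b) : a = b := by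
  cases a <;> cases b <;> simp_all [bpar]

lemma hw_cast {ι : Type*} [Fintype ι] [DecidableEq ι] (x : ι → Bool) :
    ((hw x : ℕ) : ZMod 2) = ∑ i, bpar (x i) := by
  rw [hw, Finset.card_filter, Nat.cast_sum]
  refine Finset.sum_congr rfl fun i _ => ?_
  by_cases h : x i = true <;> simp [h, bpar]

lemma mod_two_eq_iff_cast {a b : ℕ} : a % 2 = b % 2 ↔ ((a : ZMod 2) = (b : ZMod 2)) := by
  rw [ZMod.natCast_eq_natCast_iff]
  exact ⟨fun h => h, fun h => h⟩

lemma telescope {K : ℕ} (G : Fin (K+1) → ZMod 2) :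
    ∑ i : Fin K, (G i.castSucc + G i.succ) = G 0 + G (Fin.last K) := by
  rw [Finset.sum_add_distrib]
  have h1 : ∑ i : Fin K, G i.castSucc = (∑ i : Fin (K+1), G i) - G (Fin.last K) := by
    rw [Fin.sum_univ_castSucc]; ring
  have h2 : ∑ i : Fin K, G i.succ = (∑ i : Fin (K+1), G i) - G 0 := by
    rw [Fin.sum_univ_succ]; ring
  have h0 : (2 : ZMod 2) = 0 := rfl
  rw [h1, h2]
  linear_combination ((∑ i : Fin (K+1), G i) - G 0 - G (Fin.last K)) * h0

lemma hw_update_parity {ι : Type*} [Fintype ι] [DecidableEq ι] (x : ι → Bool) (i0 : ι) :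
    ((hw (Function.update x i0 (!x i0)) : ℕ) : ZMod 2) = (hw x : ZMod 2) + 1 := by
  rw [hw_cast, hw_cast]
  have : ∀ i, bpar (Function.update x i0 (!x i0) i)
      = bpar (x i) + (if i = i0 then 1 else 0) := by
    intro i
    by_cases h : i = i0
    · subst h; simp [Function.update_self]; cases x i <;> decide
    · simp [Function.update_of_ne h, h]
  simp only [this, Finset.sum_add_distrib, Finset.sum_ite_eq' Finset.univ i0 (fun _ => (1 : ZMod 2)),
    Finset.mem_univ, if_true]

lemma zmod2_cases : ∀ x : ZMod 2, x = 0 ∨ x = 1 := by decide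

lemma card_parity_zmod (ι : Type*) [Fintype ι] [DecidableEq ι] [Nonempty ι] (c : ZMod 2) :
    (Finset.univ.filter fun z : ι → Bool => ((hw z : ℕ) : ZMod 2) = c).card
      = 2 ^ (Fintype.card ι - 1) := by
  obtain ⟨i0⟩ := (inferInstance : Nonempty ι)
  have hinv : ∀ z : ι → Bool,
      Function.update (Function.update z i0 (!z i0)) i0
        (!(Function.update z i0 (!z i0)) i0) = z := by
    intro z; funext i
    by_cases h : i = i0
    · subst h; simp [Function.update_self]
    · simp [Function.update_of_ne h]
  have hmem : ∀ (c : ZMod 2) (z : ι → Bool), ((hw z : ℕ) : ZMod 2) = c →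
      ((hw (Function.update z i0 (!z i0)) : ℕ) : ZMod 2) = c + 1 := by
    intro c z hz; rw [hw_update_parity, hz]
  have hcard : ∀ c : ZMod 2,
      (Finset.univ.filter fun z : ι → Bool => ((hw z : ℕ) : ZMod 2) = c).card =
      (Finset.univ.filter fun z : ι → Bool => ((hw z : ℕ) : ZMod 2) = c + 1).card := by
    intro c
    refine Finset.card_bij' (fun z _ => Function.update z i0 (!z i0))
      (fun z _ => Function.update z i0 (!z i0)) ?_ ?_ ?_ ?_
    · intro z hz
      simp only [Finset.mem_filter, Finset.mem_univ, true_and] at hz ⊢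
      exact hmem c z hz
    · intro z hz
      simp only [Finset.mem_filter, Finset.mem_univ, true_and] at hz ⊢
      have h1 := hmem (c+1) z hz
      rw [h1]
      have h2 : (2 : ZMod 2) = 0 := rfl
      linear_combination h2
    · intro z _; exact hinv z
    · intro z _; exact hinv z
  have hsplit : (Finset.univ.filter fun z : ι → Bool => ((hw z : ℕ) : ZMod 2) = c).card +
      (Finset.univ.filter fun z : ι → Bool => ¬ ((hw z : ℕ) : ZMod 2) = c).card
      = Fintype.card (ι → Bool) :=
    Finset.card_filter_add_card_filter_not _
  have hneg : (Finset.univ.filter fun z : ι → Bool => ¬ ((hw z : ℕ) : ZMod 2) = c) =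
      (Finset.univ.filter fun z : ι → Bool => ((hw z : ℕ) : ZMod 2) = c + 1) := by
    apply Finset.filter_congr
    intro z _
    have key : ∀ x c : ZMod 2, ¬ x = c ↔ x = c + 1 := by decide
    exact key _ _
  have hpow : Fintype.card (ι → Bool) = 2 ^ (Fintype.card ι - 1) * 2 := by
    rw [Fintype.card_fun, Fintype.card_bool, ← pow_succ]
    congr 1
    have := Fintype.card_pos (α := ι)
    omega
  rw [hneg, ← hcard c] at hsplit
  omega

lemma card_parity_class (ι : Type*) [Fintype ι] [DecidableEq ι] [Nonempty ι] (b : ℕ)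
    (hb : b < 2) :
    (Finset.univ.filter fun z : ι → Bool => hw z % 2 = b).card = 2 ^ (Fintype.card ι - 1) := by
  have : (Finset.univ.filter fun z : ι → Bool => hw z % 2 = b) =
      (Finset.univ.filter fun z : ι → Bool => ((hw z : ℕ) : ZMod 2) = (b : ZMod 2)) := by
    apply Finset.filter_congr
    intro z _
    rw [← mod_two_eq_iff_cast, Nat.mod_eq_of_lt hb]
  rw [this, card_parity_zmod]

lemma unifParity_eq (ι : Type*) [Fintype ι] [DecidableEq ι] [Nonempty ι] (b : ℕ)
    (hb : b < 2) (y : ι → Bool) :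
    unifParity ι b y = if hw y % 2 = b then ((2:ℝ) ^ (Fintype.card ι - 1))⁻¹ else 0 := by
  rw [unifParity, card_parity_class ι b hb]
  split <;> simp

def xsumB {K : ℕ} (c : Fin K → Bool) : Bool := decide ((∑ i, bpar (c i)) = 1)

lemma bpar_xsumB {K : ℕ} (c : Fin K → Bool) : bpar (xsumB c) = ∑ i, bpar (c i) := by
  unfold xsumB
  rcases zmod2_cases (∑ i, bpar (c i)) with h | h <;> rw [h]
  · have hd : (decide ((0 : ZMod 2) = 1)) = false := by decide
    rw [hd]; rfl
  · have hd : (decide ((1 : ZMod 2) = 1)) = true := by decide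
    rw [hd]; rfl

lemma chain_equiv (K : ℕ) :
    Function.Bijective (fun s : Fin (K+1) → Bool =>
      ((s 0, fun i : Fin K => xor (s i.castSucc) (s i.succ)) : Bool × (Fin K → Bool))) := by
  rw [Fintype.bijective_iff_injective_and_card]
  constructor
  · intro s s' h
    have h0 : s 0 = s' 0 := congrArg Prod.fst h
    have hd : ∀ i : Fin K, xor (s i.castSucc) (s i.succ) = xor (s' i.castSucc) (s' i.succ) :=
      fun i => congrFun (congrArg Prod.snd h) i
    funext i
    induction i using Fin.induction with
    | zero => exact h0
    | succ i ih =>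
      have hi := hd i
      rw [ih] at hi
      cases hcs : s' i.castSucc <;> rw [hcs] at hi <;>
        cases hs : s i.succ <;> cases hs' : s' i.succ <;> simp_all
  · simp [Fintype.card_fun, Fintype.card_prod, pow_succ, mul_comm]

lemma chain_sum {K : ℕ} (c : Fin K → Bool) (f : Bool → ℝ) :
    ∑ s : Fin (K+1) → Bool,
      (if (∀ i : Fin K, xor (s i.castSucc) (s i.succ) = c i)
        then f (xor (s 0) (s (Fin.last K))) else 0)
    = 2 * f (xsumB c) := by
  have key : ∀ s : Fin (K+1) → Bool,
      (if (∀ i : Fin K, xor (s i.castSucc) (s i.succ) = c i)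
        then f (xor (s 0) (s (Fin.last K))) else 0)
      = (fun q : Bool × (Fin K → Bool) => if q.2 = c then f (xsumB q.2) else 0)
          ((s 0, fun i : Fin K => xor (s i.castSucc) (s i.succ))) := by
    intro s
    by_cases h : ∀ i : Fin K, xor (s i.castSucc) (s i.succ) = c i
    · rw [if_pos h]
      simp only
      rw [if_pos (funext h)]
      congr 1
      apply bpar_inj
      rw [bpar_xsumB, bpar_xor]
      simp only [bpar_xor]
      exact (telescope (fun i => bpar (s i))).symm
    · rw [if_neg h]
      simp only
      rw [if_neg (fun hc => h (fun i => congrFun hc i))]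
  rw [Fintype.sum_bijective _ (chain_equiv K) _
      (fun q : Bool × (Fin K → Bool) => if q.2 = c then f (xsumB q.2) else 0) key]
  rw [Fintype.sum_prod_type]
  simp only [Finset.sum_ite_eq' Finset.univ c (fun c' => f (xsumB c')), Finset.mem_univ, if_true]
  simp [Finset.sum_const]


lemma hw_comp_equiv {ι κ : Type*} [Fintype ι] [Fintype κ] [DecidableEq ι] [DecidableEq κ]
    (e : ι ≃ κ) (x : κ → Bool) : hw (fun i => x (e i)) = hw x := by
  unfold hw
  rw [Finset.card_filter, Finset.card_filter]
  exact Equiv.sum_comp e (fun k => if x k = true then 1 else 0)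

lemma walk_edge_sum {V : Type*} {G : SimpleGraph V} {a b : V} (w : G.Walk a b) (Z : V → Bool) :
    ∑ j : Fin w.length, bpar (wOf Z s(w.getVert j.val, w.getVert (j.val + 1)))
      = bpar (Z a) + bpar (Z b) := by
  have hterm : ∀ j : Fin w.length,
      bpar (wOf Z s(w.getVert j.val, w.getVert (j.val + 1)))
      = (fun i : Fin (w.length + 1) => bpar (Z (w.getVert i.val))) j.castSucc
        + (fun i : Fin (w.length + 1) => bpar (Z (w.getVert i.val))) j.succ := by
    intro j
    simp only [Fin.coe_castSucc, Fin.val_succ]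
    have : wOf Z s(w.getVert j.val, w.getVert (j.val + 1))
        = xor (Z (w.getVert j.val)) (Z (w.getVert (j.val + 1))) := rfl
    rw [this, bpar_xor]
  rw [Finset.sum_congr rfl (fun j _ => hterm j),
    telescope (fun i : Fin (w.length + 1) => bpar (Z (w.getVert i.val)))]
  simp

def asm4 {V W E M : Type*}
    (q : (M → Bool) × (E → Bool) × (W → Bool) × (V → Bool)) :
    ((V ⊕ W ⊕ E) ⊕ M) → Bool :=
  Sum.elim (Sum.elim q.2.2.2 (Sum.elim q.2.2.1 q.2.1)) q.1

lemma asm4_bijective {V W E M : Type*} :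
    Function.Bijective (asm4 (V := V) (W := W) (E := E) (M := M)) := by
  constructor
  · rintro ⟨S, Wf, Y, X⟩ ⟨S', Wf', Y', X'⟩ h
    simp only [Prod.mk.injEq]
    refine ⟨funext fun k => congrFun h (Sum.inr k),
      funext fun e => congrFun h (Sum.inl (Sum.inr (Sum.inr e))),
      funext fun w => congrFun h (Sum.inl (Sum.inr (Sum.inl w))),
      funext fun v => congrFun h (Sum.inl (Sum.inl v))⟩
  · intro z
    refine ⟨(fun k => z (Sum.inr k),
      fun e => z (Sum.inl (Sum.inr (Sum.inr e))), fun w => z (Sum.inl (Sum.inr (Sum.inl w))),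
      fun v => z (Sum.inl (Sum.inl v))), ?_⟩
    funext i
    rcases i with (v | w | e) | k <;> rfl

def gOut {V : Type} [DecidableEq V] {G : SimpleGraph V} [DecidableRel G.Adj]
    (vstar : V) (d : V → ℕ) (K : ℕ)
    (eF : (Σ v : V, Fin (d v)) → G.edgeSet) (πP : (Σ v : V, Fin (d v)) ≃ Fin K)
    (z : ((V ⊕ V ⊕ G.edgeSet) ⊕ Fin (K + 1)) → Bool) :
    (V ⊕ (V ⊕ (Σ v : V, Fin (d v)))) → Bool
  | Sum.inl v => z (Sum.inl (Sum.inl v))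
  | Sum.inr (Sum.inl v) => xor (z (Sum.inl (Sum.inr (Sum.inl v))))
      (if v = vstar then xor (z (Sum.inr 0)) (z (Sum.inr (Fin.last K))) else false)
  | Sum.inr (Sum.inr p) =>
      xor (z (Sum.inl (Sum.inl p.1)) && z (Sum.inl (Sum.inr (Sum.inr (eF p)))))
        (xor (z (Sum.inr ((πP p).castSucc))) (z (Sum.inr ((πP p).succ))))

lemma gOut_eq_iff {V : Type} [DecidableEq V] {G : SimpleGraph V} [DecidableRel G.Adj]
    (vstar : V) (d : V → ℕ) (K : ℕ)
    (eF : (Σ v : V, Fin (d v)) → G.edgeSet) (πP : (Σ v : V, Fin (d v)) ≃ Fin K)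
    (b' : (V ⊕ (V ⊕ (Σ v : V, Fin (d v)))) → Bool)
    (X : V → Bool) (S : Fin (K + 1) → Bool) (Wf : G.edgeSet → Bool) (Y : V → Bool) :
    gOut vstar d K eF πP (asm4 (S, Wf, Y, X)) = b' ↔
      (X = (fun v => b' (Sum.inl v)) ∧
       (Y = fun v => if v = vstar
          then xor (b' (Sum.inr (Sum.inl v))) (xor (S 0) (S (Fin.last K)))
          else b' (Sum.inr (Sum.inl v))) ∧
       ∀ i : Fin K, xor (S i.castSucc) (S i.succ) =
         xor (b' (Sum.inr (Sum.inr (πP.symm i))))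
           (X (πP.symm i).1 && Wf (eF (πP.symm i)))) := by
  have solve1 : ∀ a t c : Bool, (xor a t = c) ↔ (a = xor c t) := by decide
  have solve2 : ∀ a t c : Bool, (xor a t = c) ↔ (t = xor c a) := by decide
  constructor
  · intro h
    refine ⟨funext fun v => congrFun h (Sum.inl v), funext fun v => ?_, fun i => ?_⟩
    · have hv := congrFun h (Sum.inr (Sum.inl v))
      by_cases hv' : v = vstar
      · simp only [gOut, asm4, Sum.elim_inl, Sum.elim_inr, hv', if_pos rfl] at hv ⊢
        exact (solve1 _ _ _).mp hv
      · simp only [gOut, asm4, Sum.elim_inl, Sum.elim_inr, if_neg hv', Bool.xor_false] at hv ⊢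
        exact hv
    · have hp := congrFun h (Sum.inr (Sum.inr (πP.symm i)))
      simp only [gOut, asm4, Sum.elim_inl, Sum.elim_inr, Equiv.apply_symm_apply] at hp
      exact (solve2 _ _ _).mp hp
  · rintro ⟨hX, hY, hc⟩
    funext o
    rcases o with v | v | p
    · exact congrFun hX v
    · have := congrFun hY v
      by_cases hv' : v = vstar
      · simp only [gOut, asm4, Sum.elim_inl, Sum.elim_inr, hv', if_pos rfl] at this ⊢
        exact (solve1 _ _ _).mpr this
      · simp only [gOut, asm4, Sum.elim_inl, Sum.elim_inr, if_neg hv', Bool.xor_false] at this ⊢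
        exact this
    · have hi := hc (πP p)
      simp only [Equiv.symm_apply_apply] at hi
      simp only [gOut, asm4, Sum.elim_inl, Sum.elim_inr]
      exact (solve2 _ _ _).mpr hi


lemma hw_flip_cast {V : Type*} [Fintype V] [DecidableEq V] (vstar : V) (y : V → Bool) (ρ : Bool) :
    ((hw (fun v => if v = vstar then xor (y v) ρ else y v) : ℕ) : ZMod 2)
    = (∑ v, bpar (y v)) + bpar ρ := by
  rw [hw_cast]
  have hpt : ∀ v : V, bpar (if v = vstar then xor (y v) ρ else y v)
      = bpar (y v) + (if v = vstar then bpar ρ else 0) := by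
    intro v; by_cases hv : v = vstar
    · rw [if_pos hv, if_pos hv, bpar_xor]
    · rw [if_neg hv, if_neg hv, add_zero]
  rw [Finset.sum_congr rfl fun v _ => hpt v, Finset.sum_add_distrib,
    Finset.sum_ite_eq' Finset.univ vstar fun _ => bpar ρ]
  simp

theorem main_push {V : Type} [Fintype V] [DecidableEq V] (G : SimpleGraph V) [DecidableRel G.Adj]
    (vstar : V) (d : V → ℕ) (K : ℕ)
    (eF : (Σ v : V, Fin (d v)) → G.edgeSet) (πP : (Σ v : V, Fin (d v)) ≃ Fin K)
    (heF : ∀ (Z : V → Bool) (v : V),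
      ∑ j : Fin (d v), bpar (wOf Z (eF ⟨v, j⟩).1) = bpar (Z vstar) + bpar (Z v))
    (b' : (V ⊕ (V ⊕ (Σ v : V, Fin (d v)))) → Bool) :
    ∑ z : ((V ⊕ V ⊕ G.edgeSet) ⊕ Fin (K + 1)) → Bool,
      (if gOut vstar d K eF πP z = b'
        then dHost G (fun i => z (Sum.inl i)) * (1 / 2 : ℝ) ^ (K + 1) else 0)
    = biased (1 / 4) (fun v => b' (Sum.inl v)) *
      (if hw (fun v => b' (Sum.inl v)) % 2 = 1 then (1 / 2 : ℝ) ^ (Fintype.card V + K)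
       else if hw (fun o : V ⊕ (Σ v : V, Fin (d v)) => b' (Sum.inr o)) % 2
              = (hw (fun v => b' (Sum.inl v)) / 2) % 2
            then ((2 : ℝ) ^ (Fintype.card V + K - 1))⁻¹ else 0) := by
  classical
  have step1 :
      (∑ z : ((V ⊕ V ⊕ G.edgeSet) ⊕ Fin (K + 1)) → Bool,
        (if gOut vstar d K eF πP z = b'
          then dHost G (fun i => z (Sum.inl i)) * (1 / 2 : ℝ) ^ (K + 1) else 0))
      = ∑ q : (Fin (K + 1) → Bool) × (G.edgeSet → Bool) × (V → Bool) × (V → Bool),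
        (if gOut vstar d K eF πP (asm4 q) = b'
          then dHost G (fun i => asm4 q (Sum.inl i)) * (1 / 2 : ℝ) ^ (K + 1) else 0) :=
    (Fintype.sum_bijective asm4 asm4_bijective _ _ (fun q => rfl)).symm
  rw [step1]
  simp only [Fintype.sum_prod_type]
  simp only [gOut_eq_iff vstar d K eF πP b', ite_and]
  simp only [Finset.sum_ite_eq', Finset.mem_univ, if_true]
  -- abbreviations (as plain lambdas)
  have hne : Nonempty V := ⟨vstar⟩
  have hD : ∀ (S : Fin (K + 1) → Bool) (W : G.edgeSet → Bool),
      (dHost G fun i => asm4 (S, W,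
          fun v => if v = vstar
            then b' (Sum.inr (Sum.inl v)) ^^ (S 0 ^^ S (Fin.last K))
            else b' (Sum.inr (Sum.inl v)),
          fun v => b' (Sum.inl v)) (Sum.inl i))
      = biased (1 / 4) (fun v => b' (Sum.inl v)) *
          ∑ Z : V → Bool, (1 / 2 : ℝ) ^ Fintype.card V *
            (if ∀ e : G.edgeSet, W e = wOf Z e.1 then 1 else 0) *
            (if hw (fun v => b' (Sum.inl v)) % 2 = 1 then (1 / 2 : ℝ) ^ Fintype.card V
             else unifParity V
               ((ip Z (fun v => b' (Sum.inl v)) + hw (fun v => b' (Sum.inl v)) / 2) % 2)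
               (fun v => if v = vstar
                  then b' (Sum.inr (Sum.inl v)) ^^ (S 0 ^^ S (Fin.last K))
                  else b' (Sum.inr (Sum.inl v)))) := by
    intro S W
    rfl
  have key : ∀ (S : Fin (K + 1) → Bool) (W : G.edgeSet → Bool),
      (if ∀ (i : Fin K), (S i.castSucc ^^ S i.succ) =
            (b' (Sum.inr (Sum.inr (πP.symm i))) ^^
              b' (Sum.inl (πP.symm i).fst) && W (eF (πP.symm i))) then
        (dHost G fun i => asm4 (S, W,
            fun v => if v = vstar
              then b' (Sum.inr (Sum.inl v)) ^^ (S 0 ^^ S (Fin.last K))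
              else b' (Sum.inr (Sum.inl v)),
            fun v => b' (Sum.inl v)) (Sum.inl i)) * (1 / 2 : ℝ) ^ (K + 1)
      else 0)
      = ∑ Z : V → Bool,
          (if W = (fun e : G.edgeSet => wOf Z e.1) then
            (if ∀ (i : Fin K), (S i.castSucc ^^ S i.succ) =
                  (b' (Sum.inr (Sum.inr (πP.symm i))) ^^
                    b' (Sum.inl (πP.symm i).fst) && W (eF (πP.symm i))) then
              biased (1 / 4) (fun v => b' (Sum.inl v)) *
                ((1 / 2 : ℝ) ^ Fintype.card V *
                  (if hw (fun v => b' (Sum.inl v)) % 2 = 1 then (1 / 2 : ℝ) ^ Fintype.card V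
                   else unifParity V
                     ((ip Z (fun v => b' (Sum.inl v)) + hw (fun v => b' (Sum.inl v)) / 2) % 2)
                     (fun v => if v = vstar
                        then b' (Sum.inr (Sum.inl v)) ^^ (S 0 ^^ S (Fin.last K))
                        else b' (Sum.inr (Sum.inl v))))) * (1 / 2 : ℝ) ^ (K + 1)
            else 0)
          else 0) := by
    intro S W
    by_cases hch : ∀ (i : Fin K), (S i.castSucc ^^ S i.succ) =
        (b' (Sum.inr (Sum.inr (πP.symm i))) ^^
          b' (Sum.inl (πP.symm i).fst) && W (eF (πP.symm i)))
    · rw [if_pos hch, hD S W, Finset.mul_sum, Finset.sum_mul]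
      refine Finset.sum_congr rfl fun Z _ => ?_
      by_cases hW : W = (fun e : G.edgeSet => wOf Z e.1)
      · rw [if_pos hW, if_pos hch,
          if_pos (show ∀ e : G.edgeSet, W e = wOf Z e.1 from fun e => by rw [hW])]
        ring
      · rw [if_neg hW, if_neg (fun hall => hW (funext hall))]
        ring
    · rw [if_neg hch]
      symm
      refine Finset.sum_eq_zero fun Z _ => ?_
      simp [hch]
  rw [Finset.sum_congr rfl fun S _ => Finset.sum_congr rfl fun W _ => key S W]
  have swap : ∀ S : Fin (K + 1) → Bool,
      (∑ W : G.edgeSet → Bool, ∑ Z : V → Bool,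
        (if W = (fun e : G.edgeSet => wOf Z e.1) then
            (if ∀ (i : Fin K), (S i.castSucc ^^ S i.succ) =
                  (b' (Sum.inr (Sum.inr (πP.symm i))) ^^
                    b' (Sum.inl (πP.symm i).fst) && W (eF (πP.symm i))) then
              biased (1 / 4) (fun v => b' (Sum.inl v)) *
                ((1 / 2 : ℝ) ^ Fintype.card V *
                  (if hw (fun v => b' (Sum.inl v)) % 2 = 1 then (1 / 2 : ℝ) ^ Fintype.card V
                   else unifParity V
                     ((ip Z (fun v => b' (Sum.inl v)) + hw (fun v => b' (Sum.inl v)) / 2) % 2)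
                     (fun v => if v = vstar
                        then b' (Sum.inr (Sum.inl v)) ^^ (S 0 ^^ S (Fin.last K))
                        else b' (Sum.inr (Sum.inl v))))) * (1 / 2 : ℝ) ^ (K + 1)
            else 0)
          else 0))
      = ∑ Z : V → Bool,
          (if ∀ (i : Fin K), (S i.castSucc ^^ S i.succ) =
                (b' (Sum.inr (Sum.inr (πP.symm i))) ^^
                  b' (Sum.inl (πP.symm i).fst) && wOf Z (eF (πP.symm i)).1) then
            biased (1 / 4) (fun v => b' (Sum.inl v)) *
              ((1 / 2 : ℝ) ^ Fintype.card V *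
                (if hw (fun v => b' (Sum.inl v)) % 2 = 1 then (1 / 2 : ℝ) ^ Fintype.card V
                 else unifParity V
                   ((ip Z (fun v => b' (Sum.inl v)) + hw (fun v => b' (Sum.inl v)) / 2) % 2)
                   (fun v => if v = vstar
                      then b' (Sum.inr (Sum.inl v)) ^^ (S 0 ^^ S (Fin.last K))
                      else b' (Sum.inr (Sum.inl v))))) * (1 / 2 : ℝ) ^ (K + 1)
          else 0) := by
    intro S
    rw [Finset.sum_comm]
    refine Finset.sum_congr rfl fun Z _ => ?_
    rw [Finset.sum_ite_eq' Finset.univ (fun e : G.edgeSet => wOf Z e.1)]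
    simp
  rw [Finset.sum_congr rfl fun S _ => swap S]
  rw [Finset.sum_comm]
  have hchain : ∀ Z : V → Bool,
      (∑ S : Fin (K + 1) → Bool,
        (if ∀ (i : Fin K), (S i.castSucc ^^ S i.succ) =
              (b' (Sum.inr (Sum.inr (πP.symm i))) ^^
                b' (Sum.inl (πP.symm i).fst) && wOf Z (eF (πP.symm i)).1) then
          biased (1 / 4) (fun v => b' (Sum.inl v)) *
            ((1 / 2 : ℝ) ^ Fintype.card V *
              (if hw (fun v => b' (Sum.inl v)) % 2 = 1 then (1 / 2 : ℝ) ^ Fintype.card V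
               else unifParity V
                 ((ip Z (fun v => b' (Sum.inl v)) + hw (fun v => b' (Sum.inl v)) / 2) % 2)
                 (fun v => if v = vstar
                    then b' (Sum.inr (Sum.inl v)) ^^ (S 0 ^^ S (Fin.last K))
                    else b' (Sum.inr (Sum.inl v))))) * (1 / 2 : ℝ) ^ (K + 1)
        else 0))
      = 2 * (fun rho : Bool =>
          biased (1 / 4) (fun v => b' (Sum.inl v)) *
            ((1 / 2 : ℝ) ^ Fintype.card V *
              (if hw (fun v => b' (Sum.inl v)) % 2 = 1 then (1 / 2 : ℝ) ^ Fintype.card V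
               else unifParity V
                 ((ip Z (fun v => b' (Sum.inl v)) + hw (fun v => b' (Sum.inl v)) / 2) % 2)
                 (fun v => if v = vstar
                    then b' (Sum.inr (Sum.inl v)) ^^ rho
                    else b' (Sum.inr (Sum.inl v))))) * (1 / 2 : ℝ) ^ (K + 1))
          (xsumB (fun i : Fin K =>
            b' (Sum.inr (Sum.inr (πP.symm i))) ^^
              (b' (Sum.inl (πP.symm i).fst) && wOf Z (eF (πP.symm i)).1))) := by
    intro Z
    exact chain_sum
      (fun i : Fin K => b' (Sum.inr (Sum.inr (πP.symm i))) ^^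
        (b' (Sum.inl (πP.symm i).fst) && wOf Z (eF (πP.symm i)).1))
      (fun rho : Bool =>
        biased (1 / 4) (fun v => b' (Sum.inl v)) *
          ((1 / 2 : ℝ) ^ Fintype.card V *
            (if hw (fun v => b' (Sum.inl v)) % 2 = 1 then (1 / 2 : ℝ) ^ Fintype.card V
             else unifParity V
               ((ip Z (fun v => b' (Sum.inl v)) + hw (fun v => b' (Sum.inl v)) / 2) % 2)
               (fun v => if v = vstar
                  then b' (Sum.inr (Sum.inl v)) ^^ rho
                  else b' (Sum.inr (Sum.inl v))))) * (1 / 2 : ℝ) ^ (K + 1))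
  rw [Finset.sum_congr rfl fun Z _ => hchain Z]
  simp only []
  by_cases hpar : hw (fun v => b' (Sum.inl v)) % 2 = 1
  · simp only [if_pos hpar]
    rw [Finset.sum_const, Finset.card_univ, Fintype.card_fun, Fintype.card_bool, nsmul_eq_mul]
    push_cast
    rw [pow_add]
    field_simp
    have h2 : (1/2:ℝ)^(Fintype.card V) * 2^(Fintype.card V) = 1 := by rw [← mul_pow]; norm_num
    linear_combination (biased (1 / 4) fun v => b' (Sum.inl v)) * (1/2:ℝ)^(Fintype.card V) * (1/2:ℝ)^K * h2
  · simp only [if_neg hpar]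
    have hpar0 : hw (fun v => b' (Sum.inl v)) % 2 = 0 := by omega
    have hX0cast : ((hw (fun v => b' (Sum.inl v)) : ℕ) : ZMod 2) = 0 := by
      have h' : hw (fun v => b' (Sum.inl v)) % 2 = 0 % 2 := by rw [hpar0]
      simpa using mod_two_eq_iff_cast.mp h'
    have hval : ∀ Z : V → Bool,
        unifParity V ((ip Z (fun v => b' (Sum.inl v)) + hw (fun v => b' (Sum.inl v)) / 2) % 2)
          (fun v => if v = vstar
            then b' (Sum.inr (Sum.inl v)) ^^
              xsumB (fun i : Fin K => b' (Sum.inr (Sum.inr (πP.symm i))) ^^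
                (b' (Sum.inl (πP.symm i).fst) && wOf Z (eF (πP.symm i)).1))
            else b' (Sum.inr (Sum.inl v)))
        = if (hw fun o : V ⊕ ((v : V) × Fin (d v)) => b' (Sum.inr o)) % 2
              = (hw fun v => b' (Sum.inl v)) / 2 % 2
          then ((2 : ℝ) ^ (Fintype.card V - 1))⁻¹ else 0 := by
      intro Z
      rw [unifParity_eq V _ (Nat.mod_lt _ (by norm_num))]
      refine if_congr ?_ rfl rfl
      rw [mod_two_eq_iff_cast, mod_two_eq_iff_cast, Nat.cast_add]
      have hY : ((hw (fun v => if v = vstar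
            then b' (Sum.inr (Sum.inl v)) ^^
              xsumB (fun i : Fin K => b' (Sum.inr (Sum.inr (πP.symm i))) ^^
                (b' (Sum.inl (πP.symm i).fst) && wOf Z (eF (πP.symm i)).1))
            else b' (Sum.inr (Sum.inl v))) : ℕ) : ZMod 2)
          = (∑ v : V, bpar (b' (Sum.inr (Sum.inl v)))) +
            bpar (xsumB (fun i : Fin K => b' (Sum.inr (Sum.inr (πP.symm i))) ^^
              (b' (Sum.inl (πP.symm i).fst) && wOf Z (eF (πP.symm i)).1))) :=
        hw_flip_cast vstar (fun v => b' (Sum.inr (Sum.inl v))) _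
      have hXS : bpar (xsumB (fun i : Fin K => b' (Sum.inr (Sum.inr (πP.symm i))) ^^
            (b' (Sum.inl (πP.symm i).fst) && wOf Z (eF (πP.symm i)).1)))
          = (∑ p : (v : V) × Fin (d v), bpar (b' (Sum.inr (Sum.inr p)))) +
            ((ip Z (fun v => b' (Sum.inl v)) : ℕ) : ZMod 2) := by
        rw [bpar_xsumB]
        calc (∑ i : Fin K, bpar (b' (Sum.inr (Sum.inr (πP.symm i))) ^^
              (b' (Sum.inl (πP.symm i).fst) && wOf Z (eF (πP.symm i)).1)))
            = ∑ p : (v : V) × Fin (d v), bpar (b' (Sum.inr (Sum.inr p)) ^^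
                (b' (Sum.inl p.fst) && wOf Z (eF p).1)) :=
              Equiv.sum_comp πP.symm (fun p => bpar (b' (Sum.inr (Sum.inr p)) ^^
                (b' (Sum.inl p.fst) && wOf Z (eF p).1)))
          _ = ∑ p : (v : V) × Fin (d v), (bpar (b' (Sum.inr (Sum.inr p))) +
                bpar (b' (Sum.inl p.fst) && wOf Z (eF p).1)) := by
              simp only [bpar_xor]
          _ = (∑ p : (v : V) × Fin (d v), bpar (b' (Sum.inr (Sum.inr p)))) +
                ∑ p : (v : V) × Fin (d v), bpar (b' (Sum.inl p.fst) && wOf Z (eF p).1) :=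
              Finset.sum_add_distrib
          _ = (∑ p : (v : V) × Fin (d v), bpar (b' (Sum.inr (Sum.inr p)))) +
                ((ip Z (fun v => b' (Sum.inl v)) : ℕ) : ZMod 2) := by
              congr 1
              rw [← Finset.univ_sigma_univ, Finset.sum_sigma]
              have hin : ∀ v : V, (∑ j : Fin (d v), bpar (b' (Sum.inl v) && wOf Z (eF ⟨v, j⟩).1))
                  = (if b' (Sum.inl v) = true then bpar (Z vstar) else 0) +
                    (if b' (Sum.inl v) = true then bpar (Z v) else 0) := by
                intro v
                by_cases hv : b' (Sum.inl v) = true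
                · simp only [hv, Bool.true_and, if_pos]
                  exact heF Z v
                · have hv' : b' (Sum.inl v) = false := by
                    revert hv; cases b' (Sum.inl v) <;> simp
                  simp only [hv', Bool.false_and]
                  simp [bpar]
              rw [Finset.sum_congr rfl fun v _ => hin v, Finset.sum_add_distrib]
              have hfirst : (∑ v : V, if b' (Sum.inl v) = true then bpar (Z vstar) else 0) = 0 := by
                rw [← Finset.sum_filter, Finset.sum_const]
                have hcard : (Finset.univ.filter fun v => b' (Sum.inl v) = true).card
                    = hw (fun v => b' (Sum.inl v)) := rfl
                rw [hcard, nsmul_eq_mul, hX0cast, zero_mul]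
              have hsec : (∑ v : V, if b' (Sum.inl v) = true then bpar (Z v) else 0)
                  = ((ip Z (fun v => b' (Sum.inl v)) : ℕ) : ZMod 2) := by
                rw [ip, Finset.card_filter, Nat.cast_sum]
                refine Finset.sum_congr rfl fun v _ => ?_
                cases hz : Z v <;> cases hb : b' (Sum.inl v) <;> simp [hz, hb, bpar]
              rw [hfirst, hsec, zero_add]
      have hfull : ((hw (fun o : V ⊕ ((v : V) × Fin (d v)) => b' (Sum.inr o)) : ℕ) : ZMod 2)
          = (∑ v : V, bpar (b' (Sum.inr (Sum.inl v)))) +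
            ∑ p : (v : V) × Fin (d v), bpar (b' (Sum.inr (Sum.inr p))) := by
        rw [hw_cast, Fintype.sum_sum_type]
      rw [hY, hXS, hfull]
      constructor <;> intro h <;> linear_combination h
    rw [Finset.sum_congr rfl fun Z _ => by rw [hval Z]]
    by_cases hc : (hw fun o : V ⊕ ((v : V) × Fin (d v)) => b' (Sum.inr o)) % 2
        = (hw fun v => b' (Sum.inl v)) / 2 % 2
    · simp only [if_pos hc]
      rw [Finset.sum_const, Finset.card_univ, Fintype.card_fun, Fintype.card_bool, nsmul_eq_mul]
      obtain ⟨a, ha⟩ : ∃ a, Fintype.card V = a + 1 :=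
        ⟨Fintype.card V - 1, by have := Fintype.card_pos (α := V); omega⟩
      rw [ha]
      have h1 : a + 1 + K - 1 = a + K := by omega
      have h2 : a + 1 - 1 = a := by omega
      rw [h1, h2]
      push_cast
      rw [pow_add, pow_add]
      field_simp
      have h2a : (1/2:ℝ)^a * 2^a = 1 := by rw [← mul_pow]; norm_num
      have h2K : (1/2:ℝ)^K * 2^K = 1 := by rw [← mul_pow]; norm_num
      linear_combination (biased (1 / 4) fun v => b' (Sum.inl v)) * (1/2:ℝ)^K * 2^K * h2a
        + (biased (1 / 4) fun v => b' (Sum.inl v)) * h2K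
    · simp only [if_neg hc]
      simp


lemma card3_le {α : Type*} [DecidableEq α] (a b c : α) : ({a, b, c} : Finset α).card ≤ 5 := by
  have h1 := Finset.card_insert_le a ({b, c} : Finset α)
  have h2 := Finset.card_insert_le b ({c} : Finset α)
  have h3 : ({c} : Finset α).card = 1 := Finset.card_singleton c
  omega

lemma card4_le {α : Type*} [DecidableEq α] (a b c d : α) : ({a, b, c, d} : Finset α).card ≤ 5 := by
  have h1 := Finset.card_insert_le a ({b, c, d} : Finset α)
  have h2 := Finset.card_insert_le b ({c, d} : Finset α)
  have h3 := Finset.card_insert_le c ({d} : Finset α)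
  have h4 : ({d} : Finset α).card = 1 := Finset.card_singleton d
  omega

theorem stmt3 {V : Type} [Fintype V] [DecidableEq V] (G : SimpleGraph V) [DecidableRel G.Adj]
    (hT : G.IsTree) (vstar : V) (K : ℕ) (hK : K = ∑ v : V, G.dist vstar v) :
    ∃ (M : ℕ) (red : (((V ⊕ V ⊕ G.edgeSet) ⊕ Fin M) → Bool) →
        Fin (Fintype.card V + (Fintype.card V + K)) → Bool),
      IsLocal 5 red ∧
      push red (fun z => dHost G (fun i => z (Sum.inl i)) * (1 / 2 : ℝ) ^ M) =
        dHard' (Fintype.card V) (Fintype.card V + K) := by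
  classical
  have hconn : G.Connected := hT.isConnected
  have hreach : ∀ v : V, G.Reachable vstar v := fun v => hconn.preconnected vstar v
  choose w hwlen using fun v => (hreach v).exists_walk_length_eq_dist
  have hlt : ∀ (v : V) (j : Fin (G.dist vstar v)), (j : ℕ) < (w v).length := fun v j => by
    rw [hwlen v]; exact j.isLt
  let eF : (Σ v : V, Fin (G.dist vstar v)) → G.edgeSet := fun p =>
    ⟨s((w p.1).getVert p.2.val, (w p.1).getVert (p.2.val + 1)),
      (G.mem_edgeSet).mpr ((w p.1).adj_getVert_succ (hlt p.1 p.2))⟩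
  have heF : ∀ (Z : V → Bool) (v : V),
      ∑ j : Fin (G.dist vstar v), bpar (wOf Z (eF ⟨v, j⟩).1)
        = bpar (Z vstar) + bpar (Z v) := by
    intro Z v
    calc (∑ j : Fin (G.dist vstar v), bpar (wOf Z (eF ⟨v, j⟩).1))
        = ∑ m ∈ Finset.range (G.dist vstar v),
            bpar (wOf Z s((w v).getVert m, (w v).getVert (m + 1))) :=
          Fin.sum_univ_eq_sum_range
            (fun m => bpar (wOf Z s((w v).getVert m, (w v).getVert (m + 1)))) _
      _ = ∑ j : Fin (w v).length,
            bpar (wOf Z s((w v).getVert j.val, (w v).getVert (j.val + 1))) := by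
          rw [Fin.sum_univ_eq_sum_range
            (fun m => bpar (wOf Z s((w v).getVert m, (w v).getVert (m + 1)))) _, hwlen v]
      _ = bpar (Z vstar) + bpar (Z v) := walk_edge_sum (w v) Z
  have hcardP : Fintype.card (Σ v : V, Fin (G.dist vstar v)) = K := by
    rw [Fintype.card_sigma, hK]
    simp
  let πP : (Σ v : V, Fin (G.dist vstar v)) ≃ Fin K := Fintype.equivFinOfCardEq hcardP
  let ε : Fin (Fintype.card V) ≃ V := (Fintype.equivFin V).symm
  have hcardVP : Fintype.card (V ⊕ (Σ v : V, Fin (G.dist vstar v))) = Fintype.card V + K := by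
    rw [Fintype.card_sum, hcardP]
  let τ : Fin (Fintype.card V + K) ≃ V ⊕ (Σ v : V, Fin (G.dist vstar v)) :=
    (Fintype.equivFinOfCardEq hcardVP).symm
  let ψ : Fin (Fintype.card V + (Fintype.card V + K)) ≃
      V ⊕ (V ⊕ (Σ v : V, Fin (G.dist vstar v))) :=
    finSumFinEquiv.symm.trans (Equiv.sumCongr ε τ)
  refine ⟨K + 1,
    fun z i => gOut vstar (fun v => G.dist vstar v) K eF πP z (ψ i), ?_, ?_⟩
  · -- locality
    intro i
    rcases hi : ψ i with v | v | p
    · refine ⟨{Sum.inl (Sum.inl v)}, by simp, fun x y hxy => ?_⟩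
      show gOut vstar (fun v => G.dist vstar v) K eF πP x (ψ i)
          = gOut vstar (fun v => G.dist vstar v) K eF πP y (ψ i)
      rw [hi]
      simp only [gOut]
      exact hxy _ (Finset.mem_singleton_self _)
    · refine ⟨{Sum.inl (Sum.inr (Sum.inl v)), Sum.inr 0, Sum.inr (Fin.last K)},
        card3_le _ _ _, fun x y hxy => ?_⟩
      show gOut vstar (fun v => G.dist vstar v) K eF πP x (ψ i)
          = gOut vstar (fun v => G.dist vstar v) K eF πP y (ψ i)
      rw [hi]
      have h1 := hxy (Sum.inl (Sum.inr (Sum.inl v))) (by simp)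
      have h2 := hxy (Sum.inr 0) (by simp)
      have h3 := hxy (Sum.inr (Fin.last K)) (by simp)
      simp only [gOut, h1, h2, h3]
    · refine ⟨{Sum.inl (Sum.inl p.1), Sum.inl (Sum.inr (Sum.inr (eF p))),
        Sum.inr ((πP p).castSucc), Sum.inr ((πP p).succ)},
        card4_le _ _ _ _, fun x y hxy => ?_⟩
      show gOut vstar (fun v => G.dist vstar v) K eF πP x (ψ i)
          = gOut vstar (fun v => G.dist vstar v) K eF πP y (ψ i)
      rw [hi]
      have h1 := hxy (Sum.inl (Sum.inl p.1)) (by simp)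
      have h2 := hxy (Sum.inl (Sum.inr (Sum.inr (eF p)))) (by simp)
      have h3 := hxy (Sum.inr ((πP p).castSucc)) (by simp)
      have h4 := hxy (Sum.inr ((πP p).succ)) (by simp)
      simp only [gOut, h1, h2, h3, h4]
  · -- distribution identity
    funext b
    simp only [push]
    have hcond : ∀ z : ((V ⊕ V ⊕ G.edgeSet) ⊕ Fin (K + 1)) → Bool,
        ((fun i => gOut vstar (fun v => G.dist vstar v) K eF πP z (ψ i)) = b)
          = (gOut vstar (fun v => G.dist vstar v) K eF πP z = fun o => b (ψ.symm o)) := by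
      intro z
      apply propext
      constructor
      · intro h
        funext o
        have := congrFun h (ψ.symm o)
        simpa using this
      · intro h
        funext i
        have := congrFun h (ψ i)
        simpa using this
    simp only [hcond]
    rw [main_push G vstar (fun v => G.dist vstar v) K eF πP heF (fun o => b (ψ.symm o))]
    -- now identify with dHard'
    have hxcomp : ∀ i : Fin (Fintype.card V),
        b (Fin.castAdd (Fintype.card V + K) i) = b (ψ.symm (Sum.inl (ε i))) := by
      intro i
      congr 1
      show Fin.castAdd (Fintype.card V + K) i
        = finSumFinEquiv ((Equiv.sumCongr ε τ).symm (Sum.inl (ε i)))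
      simp [Equiv.sumCongr_symm, Equiv.sumCongr_apply]
    have hycomp : ∀ j : Fin (Fintype.card V + K),
        b (Fin.natAdd (Fintype.card V) j) = b (ψ.symm (Sum.inr (τ j))) := by
      intro j
      congr 1
      show Fin.natAdd (Fintype.card V) j
        = finSumFinEquiv ((Equiv.sumCongr ε τ).symm (Sum.inr (τ j)))
      simp [Equiv.sumCongr_symm, Equiv.sumCongr_apply]
    have hfunx : (fun i : Fin (Fintype.card V) => b (Fin.castAdd (Fintype.card V + K) i))
        = fun i => b (ψ.symm (Sum.inl (ε i))) := funext hxcomp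
    have hfuny : (fun j : Fin (Fintype.card V + K) => b (Fin.natAdd (Fintype.card V) j))
        = fun j => b (ψ.symm (Sum.inr (τ j))) := funext hycomp
    have hhwx : hw (fun i : Fin (Fintype.card V) => b (Fin.castAdd (Fintype.card V + K) i))
        = hw (fun v => b (ψ.symm (Sum.inl v))) := by
      rw [hfunx]
      exact hw_comp_equiv ε (fun v => b (ψ.symm (Sum.inl v)))
    have hhwy : hw (fun j : Fin (Fintype.card V + K) => b (Fin.natAdd (Fintype.card V) j))
        = hw (fun o : V ⊕ (Σ v : V, Fin (G.dist vstar v)) => b (ψ.symm (Sum.inr o))) := by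
      rw [hfuny]
      exact hw_comp_equiv τ (fun o => b (ψ.symm (Sum.inr o)))
    have hbiased : biased (1 / 4 : ℝ)
          (fun i : Fin (Fintype.card V) => b (Fin.castAdd (Fintype.card V + K) i))
        = biased (1 / 4) (fun v => b (ψ.symm (Sum.inl v))) := by
      rw [hfunx]
      exact Equiv.prod_comp ε (fun v => if b (ψ.symm (Sum.inl v)) then (1/4 : ℝ) else 1 - 1/4)
    have hm : Nonempty (Fin (Fintype.card V + K)) := by
      have : 0 < Fintype.card V := Fintype.card_pos_iff.mpr ⟨vstar⟩
      exact ⟨⟨0, by omega⟩⟩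
    rw [dHard', dHard, splitFun]
    simp only
    rw [unifParity_eq (Fin (Fintype.card V + K)) _ (Nat.mod_lt _ (by norm_num)),
      Fintype.card_fin]
    rw [hbiased, hhwx, hhwy]
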